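/- arXiv:2512.16761 — 2 statements merged into one kernel-verified Lean document; each statement's English description precedes it below -/
import Mathlib

section
/- Let λ > 0 and 0 ≤ x̄, x ≤ P_max. Then the KL divergence between Poisson(λ + x̄) and Poisson(λ + x) satisfies D(Poisson(λ + x̄) ‖ Poisson(λ + x)) ≤ (λ + P_max)·log((λ + P_max)/λ) + P_max·log(e) ≤ log(e)·(λ + P_max)²/λ + P_max·log(e). -/
/-- The Poisson probability mass function with mean `μ`. -/
noncomputable def poissonPMF (μ : ℝ) (y : ℕ) : ℝ :=
  Real.exp (-μ) * μ ^ y / (Nat.factorial y)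

/-- KL divergence in bits between pmfs on `ℕ`. -/
noncomputable def klBits (P Q : ℕ → ℝ) : ℝ := ∑' y, P y * Real.logb 2 (P y / Q y)

lemma poissonPMF_eq (a : ℝ) (y : ℕ) :
    poissonPMF a y = Real.exp (-a) * (a ^ y / y.factorial) := by
  rw [poissonPMF, mul_div_assoc]

lemma poissonPMF_summable (a : ℝ) : Summable (poissonPMF a) := by
  have h : poissonPMF a = fun y => Real.exp (-a) * (a ^ y / y.factorial) :=
    funext (poissonPMF_eq a)
  rw [h]
  exact (Real.summable_pow_div_factorial a).mul_left _

lemma poissonPMF_tsum (a : ℝ) : ∑' y, poissonPMF a y = 1 := by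
  simp only [poissonPMF_eq]
  rw [tsum_mul_left]
  have : ∑' n : ℕ, a ^ n / n.factorial = Real.exp a := by
    rw [Real.exp_eq_exp_ℝ, NormedSpace.exp_eq_tsum_div]
  rw [this, ← Real.exp_add]
  simp

lemma poissonPMF_succ (a : ℝ) (n : ℕ) :
    ((n + 1 : ℕ) : ℝ) * poissonPMF a (n + 1) = a * poissonPMF a n := by
  have hfac : ((n + 1 : ℕ) : ℝ) ≠ 0 := by positivity
  have h2 : ((n.factorial : ℝ)) ≠ 0 := by exact_mod_cast n.factorial_ne_zero
  simp only [poissonPMF, Nat.factorial_succ, pow_succ, Nat.cast_mul]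
  field_simp

lemma poissonPMF_mean_summable (a : ℝ) :
    Summable (fun y : ℕ => (y : ℝ) * poissonPMF a y) := by
  rw [← summable_nat_add_iff 1]
  have : (fun n : ℕ => ((n + 1 : ℕ) : ℝ) * poissonPMF a (n + 1))
      = fun n : ℕ => a * poissonPMF a n := by
    funext n; exact_mod_cast poissonPMF_succ a n
  simp only [Nat.cast_add, Nat.cast_one] at this ⊢
  rw [this]
  exact (poissonPMF_summable a).mul_left a

lemma poissonPMF_mean (a : ℝ) : ∑' y : ℕ, (y : ℝ) * poissonPMF a y = a := by
  rw [Summable.tsum_eq_zero_add (poissonPMF_mean_summable a)]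
  have : (fun n : ℕ => ((n : ℝ) + 1) * poissonPMF a (n + 1))
      = fun n : ℕ => a * poissonPMF a n := by
    funext n; exact_mod_cast poissonPMF_succ a n
  simp only [Nat.cast_add, Nat.cast_one, Nat.cast_zero, zero_mul, zero_add]
  rw [this, tsum_mul_left, poissonPMF_tsum a, mul_one]

lemma poissonPMF_pos {a : ℝ} (ha : 0 < a) (y : ℕ) : 0 < poissonPMF a y := by
  unfold poissonPMF
  positivity

lemma klBits_poisson {a b : ℝ} (ha : 0 < a) (hb : 0 < b) :
    klBits (poissonPMF a) (poissonPMF b)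
      = (b - a) * Real.logb 2 (Real.exp 1) + a * Real.logb 2 (a / b) := by
  have hl2 : Real.log 2 ≠ 0 := by
    have := Real.log_pos (by norm_num : (1:ℝ) < 2); linarith
  have hratio : ∀ y : ℕ, poissonPMF a y / poissonPMF b y
      = Real.exp (b - a) * (a / b) ^ y := by
    intro y
    have h2 : ((y.factorial : ℝ)) ≠ 0 := by exact_mod_cast y.factorial_ne_zero
    unfold poissonPMF
    rw [Real.exp_sub, div_pow]
    rw [Real.exp_neg, Real.exp_neg]
    field_simp
  have hterm : ∀ y : ℕ, poissonPMF a y * Real.logb 2 (poissonPMF a y / poissonPMF b y)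
      = ((b - a) / Real.log 2) * poissonPMF a y
        + (Real.log (a / b) / Real.log 2) * ((y : ℝ) * poissonPMF a y) := by
    intro y
    rw [hratio y]
    have hab : (0:ℝ) < a / b := div_pos ha hb
    rw [Real.logb, Real.log_mul (Real.exp_pos _).ne' (pow_pos hab y).ne',
      Real.log_exp, Real.log_pow]
    ring
  have h1 : Summable (fun y : ℕ => ((b - a) / Real.log 2) * poissonPMF a y) :=
    (poissonPMF_summable a).mul_left _
  have h2 : Summable (fun y : ℕ =>
      (Real.log (a / b) / Real.log 2) * ((y : ℝ) * poissonPMF a y)) :=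
    (poissonPMF_mean_summable a).mul_left _
  unfold klBits
  calc ∑' y, poissonPMF a y * Real.logb 2 (poissonPMF a y / poissonPMF b y)
      = ∑' y, (((b - a) / Real.log 2) * poissonPMF a y
        + (Real.log (a / b) / Real.log 2) * ((y : ℝ) * poissonPMF a y)) := by
        exact tsum_congr hterm
    _ = ((b - a) / Real.log 2) * (∑' y, poissonPMF a y)
        + (Real.log (a / b) / Real.log 2) * (∑' y : ℕ, (y : ℝ) * poissonPMF a y) := by
        rw [Summable.tsum_add h1 h2, tsum_mul_left, tsum_mul_left]
    _ = (b - a) * Real.logb 2 (Real.exp 1) + a * Real.logb 2 (a / b) := by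
        rw [poissonPMF_tsum a, poissonPMF_mean a, Real.logb, Real.log_exp, Real.logb]
        ring

/-- For `λ > 0` and `0 ≤ x̄, x ≤ P_max`,
`D(Poisson(λ+x̄) ‖ Poisson(λ+x)) ≤ (λ+P_max) log₂((λ+P_max)/λ) + P_max log₂ e
  ≤ log₂ e · (λ+P_max)²/λ + P_max log₂ e`. -/
theorem kl_poisson_peak_bound (lam Pmax xbar x : ℝ) (hlam : 0 < lam)
    (hxbar : 0 ≤ xbar) (hxbar' : xbar ≤ Pmax) (hx : 0 ≤ x) (hx' : x ≤ Pmax) :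
    klBits (poissonPMF (lam + xbar)) (poissonPMF (lam + x))
      ≤ (lam + Pmax) * Real.logb 2 ((lam + Pmax) / lam)
        + Pmax * Real.logb 2 (Real.exp 1) ∧
    (lam + Pmax) * Real.logb 2 ((lam + Pmax) / lam) + Pmax * Real.logb 2 (Real.exp 1)
      ≤ Real.logb 2 (Real.exp 1) * (lam + Pmax) ^ 2 / lam
        + Pmax * Real.logb 2 (Real.exp 1) := by
  have hPmax : 0 ≤ Pmax := le_trans hxbar hxbar'
  set a := lam + xbar with ha_def
  set b := lam + x with hb_def
  set M := lam + Pmax with hM_def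
  have ha : 0 < a := by positivity
  have hb : 0 < b := by positivity
  have hM : 0 < M := by positivity
  have hl2 : 0 < Real.log 2 := Real.log_pos (by norm_num)
  have hL : (0:ℝ) < Real.logb 2 (Real.exp 1) := by
    rw [Real.logb, Real.log_exp]; positivity
  have haM : a ≤ M := by simp [ha_def, hM_def]; linarith
  have hlamb : lam ≤ b := by simp [hb_def]; linarith
  have hMlam : 1 ≤ M / lam := (one_le_div hlam).mpr (by simp [hM_def]; linarith)
  have hLM0 : 0 ≤ Real.logb 2 (M / lam) :=
    Real.logb_nonneg (by norm_num) hMlam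
  constructor
  · rw [klBits_poisson ha hb]
    have hba : b - a ≤ Pmax := by simp [ha_def, hb_def]; linarith
    have hdiv : a / b ≤ M / lam := by
      rw [div_le_div_iff₀ hb hlam]
      nlinarith
    have hmono : Real.logb 2 (a / b) ≤ Real.logb 2 (M / lam) :=
      Real.logb_le_logb_of_le (by norm_num) (div_pos ha hb) hdiv
    have h2 : a * Real.logb 2 (a / b) ≤ M * Real.logb 2 (M / lam) := by
      nlinarith [mul_nonneg (sub_nonneg.mpr haM) hLM0,
        mul_nonneg ha.le (sub_nonneg.mpr hmono)]
    nlinarith [mul_le_mul_of_nonneg_right hba hL.le]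
  · have hr : (0:ℝ) < M / lam := div_pos hM hlam
    have hlog : Real.log (M / lam) ≤ M / lam := by
      have := Real.log_le_sub_one_of_pos hr; linarith
    have key : M * Real.logb 2 (M / lam)
        ≤ Real.logb 2 (Real.exp 1) * M ^ 2 / lam := by
      rw [Real.logb, Real.logb, Real.log_exp]
      have e1 : M * (Real.log (M / lam) / Real.log 2)
          = (M * Real.log (M / lam)) / Real.log 2 := by ring
      have e2 : 1 / Real.log 2 * M ^ 2 / lam = (M ^ 2 / lam) / Real.log 2 := by ring
      rw [e1, e2, div_le_div_iff_of_pos_right hl2]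
      calc M * Real.log (M / lam) ≤ M * (M / lam) :=
            mul_le_mul_of_nonneg_left hlog hM.le
        _ = M ^ 2 / lam := by ring
    linarith
end

section
/- Let P, Q be probability mass functions on a countable set with Y₁ = {y : Q(y) > P(y)} and Y₂ = its complement. Then Σ_{y∈Y₁} P(y)·log²(P(y)/Q(y)) ≤ log(e)·( D(Q ‖ P) + 1 ). -/
/-- Core calculus fact: for `t > 1`, `(log t)² ≤ t·log t + (log 2 − 1)(t − 1)`. -/
lemma key_ineq (t : ℝ) (ht : 1 < t) :
    (Real.log t) ^ 2 ≤ t * Real.log t + (Real.log 2 - 1) * (t - 1) := by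
  have ht0 : 0 < t := by linarith
  have hlt : Real.log t ≤ t - 1 := Real.log_le_sub_one_of_pos ht0
  have hl0 : 0 < Real.log t := Real.log_pos ht
  have hln2 : (0.6931471803 : ℝ) < Real.log 2 := Real.log_two_gt_d9
  rcases le_total t 2 with h2 | h2
  · -- lower bound log t ≥ 1 - 1/t = (t-1)/t ≥ (t-1)/2
    have hlow : 1 - t⁻¹ ≤ Real.log t := Real.one_sub_inv_le_log_of_pos ht0
    have h1 : (t - 1) / t ≤ Real.log t := by
      have : (t - 1) / t = 1 - t⁻¹ := by field_simp
      linarith [this ▸ hlow]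
    have h3 : (t - 1) / 2 ≤ (t - 1) / t := by
      apply div_le_div_of_nonneg_left (by linarith) ht0 h2
    have h4 : (1 - Real.log 2) * (t - 1) ≤ Real.log t := by
      nlinarith
    -- (log t)^2 ≤ (t-1) log t
    have h5 : (Real.log t) ^ 2 ≤ (t - 1) * Real.log t := by nlinarith
    nlinarith
  · -- t ≥ 2 : log t ≤ t/2 and log t ≥ log 2
    have hsq : Real.log t ≤ t / 2 := by
      have hs0 : (0 : ℝ) ≤ t := le_of_lt ht0
      have h1 : Real.log (Real.sqrt t) = Real.log t / 2 := Real.log_sqrt hs0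
      have h2' : Real.log (Real.sqrt t) ≤ Real.sqrt t - 1 :=
        Real.log_le_sub_one_of_pos (Real.sqrt_pos.mpr ht0)
      have h3 : Real.sqrt t ^ 2 = t := Real.sq_sqrt hs0
      nlinarith [Real.sqrt_nonneg t, sq_nonneg (Real.sqrt t - 2)]
    have hlog2 : Real.log 2 ≤ Real.log t := Real.log_le_log (by norm_num) h2
    -- t log t - (log t)^2 = log t (t - log t) ≥ log2 * t/2 ≥ (1-log2)(t-1)
    have hA : Real.log 2 * (t / 2) ≤ Real.log t * (t - Real.log t) :=
      mul_le_mul hlog2 (by linarith) (by linarith) hl0.le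
    nlinarith [hA, hln2]

/-- For pmfs `P, Q` on a countable set with `Y₁ = {y : Q(y) > P(y)}`,
`Σ_{y∈Y₁} P(y) log₂²(P(y)/Q(y)) ≤ log₂ e · (D(Q‖P) + 1)`. -/
theorem sq_log_bound_via_kl (P Q : ℕ → ℝ)
    (hP0 : ∀ y, 0 < P y) (hQ0 : ∀ y, 0 ≤ Q y)
    (hP1 : HasSum P 1) (hQ1 : HasSum Q 1)
    (hD : Summable (fun y => Q y * Real.logb 2 (Q y / P y)))
    (hS : Summable (fun y : {y : ℕ // P y < Q y} =>
      P y.1 * (Real.logb 2 (P y.1 / Q y.1)) ^ 2)) :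
    (∑' y : {y : ℕ // P y < Q y}, P y.1 * (Real.logb 2 (P y.1 / Q y.1)) ^ 2)
      ≤ Real.logb 2 (Real.exp 1) * (klBits Q P + 1) := by
  set c := Real.log 2 with hc
  have hc0 : 0 < c := Real.log_pos (by norm_num)
  -- the divergence in nats
  set Dn : ℝ := ∑' y, Q y * Real.log (Q y / P y) with hDn
  -- the nonnegative integrand f
  set f : ℕ → ℝ := fun y => Q y * Real.log (Q y / P y) - (Q y - P y) with hf
  have hf0 : ∀ y, 0 ≤ f y := by
    intro y
    simp only [hf]
    rcases eq_or_lt_of_le (hQ0 y) with h0 | h0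
    · simp [← h0]; linarith [(hP0 y).le]
    · have ht0 : 0 < Q y / P y := div_pos h0 (hP0 y)
      have := Real.one_sub_inv_le_log_of_pos ht0
      have hinv : (Q y / P y)⁻¹ = P y / Q y := by
        rw [inv_div]
      rw [hinv] at this
      have := mul_le_mul_of_nonneg_left this (hQ0 y)
      have hqp : Q y * (P y / Q y) = P y := by field_simp
      nlinarith
  -- summability of the nats divergence integrand
  have hDnat : Summable (fun y => Q y * Real.log (Q y / P y)) := by
    have := hD.mul_right c
    refine this.congr fun y => ?_
    simp only [Real.logb]
    field_simp
    rw [hc]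
  have hsumf : Summable f := by
    simpa [hf] using (hDnat.sub (hQ1.summable.sub hP1.summable))
  -- Dn = ∑' f
  have hDf : Dn = ∑' y, f y := by
    have h1 : ∀ y, Q y * Real.log (Q y / P y) = f y + (Q y - P y) := by
      intro y; simp [hf]
    rw [hDn]
    rw [tsum_congr h1, Summable.tsum_add hsumf (hQ1.summable.sub hP1.summable),
      Summable.tsum_sub hQ1.summable hP1.summable, hQ1.tsum_eq, hP1.tsum_eq]
    ring
  -- subtype Y₁
  set Y₁ := {y : ℕ // P y < Q y}
  -- nats version of the LHS
  have hSnat : Summable (fun y : Y₁ => P y.1 * (Real.log (Q y.1 / P y.1)) ^ 2) := by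
    have := hS.mul_left (c ^ 2)
    refine this.congr fun y => ?_
    have hq : 0 < Q y.1 := lt_trans (hP0 y.1) y.2
    have hlpq : Real.log (P y.1 / Q y.1) = - Real.log (Q y.1 / P y.1) := by
      rw [← Real.log_inv, inv_div]
    simp only [Real.logb, hlpq]
    field_simp
    rw [hc]; ring
  -- pointwise bound on Y₁
  have hpt : ∀ y : Y₁, P y.1 * (Real.log (Q y.1 / P y.1)) ^ 2 ≤ f y.1 + c * Q y.1 := by
    intro ⟨y, hy⟩
    have hp := hP0 y
    have hq : 0 < Q y := lt_trans hp hy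
    set t := Q y / P y with htd
    have ht1 : 1 < t := (one_lt_div hp).mpr hy
    have hkey := key_ineq t ht1
    have hPt : P y * t = Q y := by rw [htd]; field_simp
    have h1 : P y * (Real.log t) ^ 2 ≤ P y * (t * Real.log t + (c - 1) * (t - 1)) :=
      mul_le_mul_of_nonneg_left hkey hp.le
    have h2 : P y * (t * Real.log t + (c - 1) * (t - 1))
        = Q y * Real.log t + (c - 1) * (Q y - P y) := by
      have : P y * (t - 1) = Q y - P y := by rw [mul_sub, hPt]; ring
      nlinarith [this]
    simp only [hf]
    have h3 : (c - 1) * (Q y - P y) ≤ - (Q y - P y) + c * Q y := by nlinarith [hp.le]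
    calc P y * (Real.log t) ^ 2 ≤ Q y * Real.log t + (c - 1) * (Q y - P y) := by
          rw [← h2]; exact h1
      _ ≤ Q y * Real.log t - (Q y - P y) + c * Q y := by linarith
  -- sum the pointwise bound
  have hsumrhs : Summable (fun y : Y₁ => f y.1 + c * Q y.1) :=
    (hsumf.subtype _).add ((hQ1.summable.subtype _).mul_left c)
  have hA : (∑' y : Y₁, P y.1 * (Real.log (Q y.1 / P y.1)) ^ 2) ≤ Dn + c := by
    calc (∑' y : Y₁, P y.1 * (Real.log (Q y.1 / P y.1)) ^ 2)
        ≤ ∑' y : Y₁, (f y.1 + c * Q y.1) := Summable.tsum_le_tsum hpt hSnat hsumrhs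
      _ = (∑' y : Y₁, f y.1) + c * (∑' y : Y₁, Q y.1) := by
          have hs1 : Summable (fun y : Y₁ => f y.1) := by
            exact hsumf.subtype {y | P y < Q y}
          have hs2 : Summable (fun y : Y₁ => c * Q y.1) := by
            have : Summable (fun y : Y₁ => Q y.1) := by
              exact hQ1.summable.subtype {y | P y < Q y}
            exact this.mul_left c
          rw [Summable.tsum_add hs1 hs2, tsum_mul_left]
      _ ≤ Dn + c * 1 := by
          gcongr
          · exact hDf ▸ Summable.tsum_subtype_le f _ hf0 hsumf
          · calc (∑' y : Y₁, Q y.1) ≤ ∑' y, Q y :=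
                Summable.tsum_subtype_le Q _ hQ0 hQ1.summable
              _ = 1 := hQ1.tsum_eq
      _ = Dn + c := by ring
  -- convert everything to nats
  have hLHS : (∑' y : Y₁, P y.1 * (Real.logb 2 (P y.1 / Q y.1)) ^ 2)
      = (∑' y : Y₁, P y.1 * (Real.log (Q y.1 / P y.1)) ^ 2) / c ^ 2 := by
    rw [← tsum_div_const]
    refine tsum_congr fun y => ?_
    have hq : 0 < Q y.1 := lt_trans (hP0 y.1) y.2
    have hlpq : Real.log (P y.1 / Q y.1) = - Real.log (Q y.1 / P y.1) := by
      rw [← Real.log_inv, inv_div]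
    simp only [Real.logb, hlpq]
    field_simp
    rw [hc]
  have hKL : klBits Q P = Dn / c := by
    rw [hDn, ← tsum_div_const]
    exact tsum_congr fun y => by simp only [klBits, Real.logb]; ring
  have hE : Real.logb 2 (Real.exp 1) = 1 / c := by
    simp [Real.logb, hc]
  rw [hLHS, hKL, hE]
  have hcne : c ≠ 0 := ne_of_gt hc0
  have hrhs : 1 / c * (Dn / c + 1) = (Dn + c) / c ^ 2 := by
    have h1 : c / c ^ 2 = 1 / c := by
      rw [pow_two, div_mul_eq_div_div, div_self hcne]
    rw [add_div, h1]
    ring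
  rw [hrhs]
  exact (div_le_div_iff_of_pos_right (by positivity)).mpr hA
end
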